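/- Let k be a field of characteristic zero and m ≥ 1. With B_0 = k[x_1^{±1}, x_2^{±1}, y, t_1, t_2]/(x_1^{-1} − x_2^{-1}, x_1 − x_2 + y(t_1 − t_2), P(x_1,y,t_1) − P(x_2,y,t_2)) where P(x,y,t) = Σ_{n=1}^m C(m,n)(x^{-1}t)^n y^{n-1}, the k-algebra homomorphism k[x^{±1}, y, t] → B_0 sending (x, y, t) ↦ (x_1, y, t_1) is an isomorphism. -/

import Mathlib

open MvPolynomial

set_option synthInstance.maxHeartbeats 1000000
set_option maxHeartbeats 1000000
set_option linter.unusedSectionVars false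

namespace Stmt8

variable (k : Type) [Field k] [CharZero k] (m : ℕ)

/-- The Laurent ring `k[x₁^{±1}, x₂^{±1}, y, t₁, t₂]`, realized as the localization of
`k[x₁,x₂,y,t₁,t₂]` away from `x₁ x₂`. Variables: `X 0 = x₁`, `X 1 = x₂`, `X 2 = y`,
`X 3 = t₁`, `X 4 = t₂`. -/
abbrev S := Localization.Away ((X 0 * X 1 : MvPolynomial (Fin 5) k))

noncomputable def x₁ : S k := algebraMap (MvPolynomial (Fin 5) k) (S k) (X 0)
noncomputable def x₂ : S k := algebraMap (MvPolynomial (Fin 5) k) (S k) (X 1)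
noncomputable def y : S k := algebraMap (MvPolynomial (Fin 5) k) (S k) (X 2)
noncomputable def t₁ : S k := algebraMap (MvPolynomial (Fin 5) k) (S k) (X 3)
noncomputable def t₂ : S k := algebraMap (MvPolynomial (Fin 5) k) (S k) (X 4)

/-- `P(x,y,t) = Σ_{n=1}^m C(m,n) (x⁻¹ t)^n y^{n-1}`. -/
noncomputable def P (x t : S k) : S k :=
  ∑ n ∈ Finset.Icc 1 m, (m.choose n : S k) * (Ring.inverse x * t) ^ n * y k ^ (n - 1)

noncomputable def I₀ : Ideal (S k) :=
  Ideal.span {Ring.inverse (x₁ k) - Ring.inverse (x₂ k),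
    x₁ k - x₂ k + y k * (t₁ k - t₂ k),
    P k m (x₁ k) (t₁ k) - P k m (x₂ k) (t₂ k)}

/-- The Laurent ring `k[x^{±1}, y, t]`, realized as the localization of `k[x,y,t]` away
from `x`. Variables: `X 0 = x`, `X 1 = y`, `X 2 = t`. -/
abbrev L := Localization.Away ((X 0 : MvPolynomial (Fin 3) k))

/-! ### Auxiliary lemmas -/

lemma inv_unique' {B : Type*} [CommRing B] {a b c : B} (hb : a * b = 1) (hc : a * c = 1) :
    b = c := by
  calc b = (a * c) * b := by rw [hc, one_mul]
    _ = (a * b) * c := by ring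
    _ = c := by rw [hb, one_mul]

lemma map_ringInverse {A B : Type*} [CommRing A] [CommRing B] (f : A →+* B) {a : A}
    (h : IsUnit a) : f (Ring.inverse a) = Ring.inverse (f a) := by
  refine inv_unique' (a := f a) ?_ ?_
  · rw [← map_mul, Ring.mul_inverse_cancel _ h, map_one]
  · exact Ring.mul_inverse_cancel _ (h.map f)

lemma isUnit_x₁ : IsUnit (x₁ k) :=
  isUnit_of_mul_isUnit_left (y := x₂ k)
    (by rw [x₁, x₂, ← map_mul]; exact IsLocalization.Away.algebraMap_isUnit _)

lemma isUnit_x₂ : IsUnit (x₂ k) :=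
  isUnit_of_mul_isUnit_right (x := x₁ k)
    (by rw [x₁, x₂, ← map_mul]; exact IsLocalization.Away.algebraMap_isUnit _)

/-- Image of `P` under a ring hom. -/
lemma map_P {B : Type*} [CommRing B] (f : S k →+* B) (x t : S k) (hx : IsUnit x) :
    f (P k m x t) = ∑ n ∈ Finset.Icc 1 m,
      (m.choose n : B) * (Ring.inverse (f x) * f t) ^ n * (f (y k)) ^ (n - 1) := by
  rw [P, map_sum]
  refine Finset.sum_congr rfl fun n _ => ?_
  rw [map_mul, map_mul, map_pow, map_pow, map_mul, map_natCast, map_ringInverse f hx]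

section Quot

local notation "π" => Ideal.Quotient.mk (I₀ k m)

lemma gen1_mem : Ring.inverse (x₁ k) - Ring.inverse (x₂ k) ∈ I₀ k m :=
  Ideal.subset_span (by simp)

lemma gen2_mem : x₁ k - x₂ k + y k * (t₁ k - t₂ k) ∈ I₀ k m :=
  Ideal.subset_span (by simp)

lemma gen3_mem : P k m (x₁ k) (t₁ k) - P k m (x₂ k) (t₂ k) ∈ I₀ k m :=
  Ideal.subset_span (by simp)

lemma π_inv_eq : π (Ring.inverse (x₁ k)) = π (Ring.inverse (x₂ k)) := by
  rw [← sub_eq_zero, ← map_sub, Ideal.Quotient.eq_zero_iff_mem]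
  exact gen1_mem k m

lemma π_x₁_mul_inv : π (x₁ k) * π (Ring.inverse (x₁ k)) = 1 := by
  rw [← map_mul, Ring.mul_inverse_cancel _ (isUnit_x₁ k), map_one]

lemma π_x₂_mul_inv : π (x₂ k) * π (Ring.inverse (x₂ k)) = 1 := by
  rw [← map_mul, Ring.mul_inverse_cancel _ (isUnit_x₂ k), map_one]

lemma π_x_eq : π (x₁ k) = π (x₂ k) := by
  linear_combination (π (x₂ k)) * π_x₁_mul_inv k m - (π (x₁ k)) * π_x₂_mul_inv k m -
    (π (x₁ k) * π (x₂ k)) * π_inv_eq k m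

lemma π_yt : π (y k) * (π (t₁ k) - π (t₂ k)) = 0 := by
  have h : π (x₁ k - x₂ k + y k * (t₁ k - t₂ k)) = 0 :=
    Ideal.Quotient.eq_zero_iff_mem.mpr (gen2_mem k m)
  rw [map_add, map_sub, map_mul, map_sub] at h
  rw [π_x_eq] at h
  linear_combination h

lemma π_t_eq (hm : 1 ≤ m) : π (t₁ k) = π (t₂ k) := by
  set a := π (Ring.inverse (x₁ k)) with ha
  set Y := π (y k) with hY
  set T₁ := π (t₁ k) with hT₁
  set T₂ := π (t₂ k) with hT₂
  have h3 : π (P k m (x₁ k) (t₁ k)) - π (P k m (x₂ k) (t₂ k)) = 0 := by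
    rw [← map_sub, Ideal.Quotient.eq_zero_iff_mem]
    exact gen3_mem k m
  rw [map_P k m _ _ _ (isUnit_x₁ k), map_P k m _ _ _ (isUnit_x₂ k)] at h3
  rw [← map_ringInverse _ (isUnit_x₁ k), ← map_ringInverse _ (isUnit_x₂ k)] at h3
  rw [← π_inv_eq] at h3
  rw [← Finset.sum_sub_distrib] at h3
  have key : ∑ n ∈ Finset.Icc 1 m,
      ((m.choose n : S k ⧸ I₀ k m) * (a * T₁) ^ n * Y ^ (n - 1) -
       (m.choose n : S k ⧸ I₀ k m) * (a * T₂) ^ n * Y ^ (n - 1)) =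
      (m.choose 1 : S k ⧸ I₀ k m) * (a * T₁) ^ 1 * Y ^ (1 - 1) -
       (m.choose 1 : S k ⧸ I₀ k m) * (a * T₂) ^ 1 * Y ^ (1 - 1) := by
    refine Finset.sum_eq_single_of_mem 1 (by simp [hm]) fun n hn hne => ?_
    have hn2 : 2 ≤ n := by
      rcases Finset.mem_Icc.mp hn with ⟨h1, _⟩; omega
    obtain ⟨g, hg⟩ := sub_dvd_pow_sub_pow T₁ T₂ n
    have hpow : Y ^ (n - 1) = Y ^ (n - 2) * Y := by
      rw [← pow_succ]; congr 1; omega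
    have hyt' : Y * (T₁ - T₂) = 0 := π_yt k m
    have : (m.choose n : S k ⧸ I₀ k m) * (a * T₁) ^ n * Y ^ (n - 1) -
        (m.choose n : S k ⧸ I₀ k m) * (a * T₂) ^ n * Y ^ (n - 1) =
        ((m.choose n : S k ⧸ I₀ k m) * a ^ n * Y ^ (n - 2) * g) * (Y * (T₁ - T₂)) := by
      rw [hpow]
      linear_combination ((m.choose n : S k ⧸ I₀ k m) * a ^ n * (Y ^ (n - 2) * Y)) * hg
    rw [this, hyt']
    ring
  rw [key] at h3
  simp only [Nat.choose_one_right, pow_one, Nat.sub_self, pow_zero, mul_one] at h3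
  have h4 : (m : S k ⧸ I₀ k m) * (a * (T₁ - T₂)) = 0 := by linear_combination h3
  have hmu : IsUnit ((m : ℕ) : S k ⧸ I₀ k m) := by
    have hk : IsUnit ((m : ℕ) : k) :=
      isUnit_iff_ne_zero.mpr (Nat.cast_ne_zero.mpr (by omega))
    have := hk.map ((Ideal.Quotient.mk (I₀ k m)).comp
      ((algebraMap (MvPolynomial (Fin 5) k) (S k)).comp (C : k →+* MvPolynomial (Fin 5) k)))
    simpa using this
  have h5 : a * (T₁ - T₂) = 0 := (hmu.mul_right_eq_zero).mp h4
  have hau : IsUnit a := (isUnit_x₁ k).ringInverse.map _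
  have h6 : T₁ - T₂ = 0 := (hau.mul_right_eq_zero).mp h5
  exact sub_eq_zero.mp h6

end Quot

/-- The `k`-algebra homomorphism `k[x^{±1}, y, t] → B₀` sending `x ↦ x₁`, `y ↦ y`,
`t ↦ t₁` is an isomorphism. -/
theorem stmt8 (hm : 1 ≤ m) :
    ∃ e : L k ≃+* (S k ⧸ I₀ k m),
      e (algebraMap (MvPolynomial (Fin 3) k) (L k) (X 0)) =
          Ideal.Quotient.mk (I₀ k m) (x₁ k) ∧
      e (algebraMap (MvPolynomial (Fin 3) k) (L k) (X 1)) =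
          Ideal.Quotient.mk (I₀ k m) (y k) ∧
      e (algebraMap (MvPolynomial (Fin 3) k) (L k) (X 2)) =
          Ideal.Quotient.mk (I₀ k m) (t₁ k) ∧
      ∀ c : k, e (algebraMap k (L k) c) = algebraMap k (S k ⧸ I₀ k m) c := by
  classical
  set q : S k →+* S k ⧸ I₀ k m := Ideal.Quotient.mk (I₀ k m) with hqdef
  -- forward ring hom
  set F : MvPolynomial (Fin 3) k →+* S k ⧸ I₀ k m :=
    (MvPolynomial.aeval (R := k) ![q (x₁ k), q (y k), q (t₁ k)]).toRingHom with hFdef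
  have hFX0 : F (X 0) = q (x₁ k) := by simp [hFdef]
  have hFX1 : F (X 1) = q (y k) := by simp [hFdef]
  have hFX2 : F (X 2) = q (t₁ k) := by simp [hFdef]
  have hFC : ∀ c : k, F (C c) = algebraMap k (S k ⧸ I₀ k m) c := fun c => by
    simp [hFdef]
  have hFu : IsUnit (F (X 0)) := by rw [hFX0]; exact (isUnit_x₁ k).map q
  set φ : L k →+* S k ⧸ I₀ k m :=
    IsLocalization.Away.lift (S := L k) (X 0 : MvPolynomial (Fin 3) k) hFu with hφdef
  have hφ : ∀ p : MvPolynomial (Fin 3) k,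
      φ (algebraMap (MvPolynomial (Fin 3) k) (L k) p) = F p := fun p =>
    IsLocalization.Away.lift_eq _ hFu p
  -- backward ring hom
  set lx : L k := algebraMap (MvPolynomial (Fin 3) k) (L k) (X 0) with hlx
  set ly : L k := algebraMap (MvPolynomial (Fin 3) k) (L k) (X 1) with hly
  set lt : L k := algebraMap (MvPolynomial (Fin 3) k) (L k) (X 2) with hlt
  set G : MvPolynomial (Fin 5) k →+* L k :=
    (MvPolynomial.aeval (R := k) ![lx, lx, ly, lt, lt]).toRingHom with hGdef
  have hlxu : IsUnit lx := IsLocalization.Away.algebraMap_isUnit _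
  have hGu : IsUnit (G (X 0 * X 1)) := by
    rw [map_mul]
    have h0 : G (X 0) = lx := by simp [hGdef]
    have h1 : G (X 1) = lx := by simp [hGdef]
    rw [h0, h1]
    exact hlxu.mul hlxu
  set Gs : S k →+* L k :=
    IsLocalization.Away.lift (S := S k) ((X 0 * X 1 : MvPolynomial (Fin 5) k)) hGu with hGsdef
  have hGs : ∀ p : MvPolynomial (Fin 5) k,
      Gs (algebraMap (MvPolynomial (Fin 5) k) (S k) p) = G p := fun p =>
    IsLocalization.Away.lift_eq _ hGu p
  have hGx₁ : Gs (x₁ k) = lx := by rw [x₁, hGs]; simp [hGdef]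
  have hGx₂ : Gs (x₂ k) = lx := by rw [x₂, hGs]; simp [hGdef]
  have hGy : Gs (y k) = ly := by rw [y, hGs]; simp [hGdef]
  have hGt₁ : Gs (t₁ k) = lt := by rw [t₁, hGs]; simp [hGdef]
  have hGt₂ : Gs (t₂ k) = lt := by rw [t₂, hGs]; simp [hGdef]
  have hGP : Gs (P k m (x₁ k) (t₁ k)) = Gs (P k m (x₂ k) (t₂ k)) := by
    rw [map_P k m Gs _ _ (isUnit_x₁ k), map_P k m Gs _ _ (isUnit_x₂ k),
      hGx₁, hGx₂, hGt₁, hGt₂]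
  have hker : I₀ k m ≤ RingHom.ker Gs := by
    rw [I₀, Ideal.span_le]
    rintro z hz
    simp only [Set.mem_insert_iff, Set.mem_singleton_iff] at hz
    rcases hz with rfl | rfl | rfl
    · rw [SetLike.mem_coe, RingHom.mem_ker, map_sub,
        map_ringInverse Gs (isUnit_x₁ k), map_ringInverse Gs (isUnit_x₂ k), hGx₁, hGx₂, sub_self]
    · rw [SetLike.mem_coe, RingHom.mem_ker, map_add, map_sub, map_mul, map_sub,
        hGx₁, hGx₂, hGy, hGt₁, hGt₂]
      ring
    · rw [SetLike.mem_coe, RingHom.mem_ker, map_sub, hGP, sub_self]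
  set ψ : S k ⧸ I₀ k m →+* L k :=
    Ideal.Quotient.lift (I₀ k m) Gs (fun a ha => hker ha) with hψdef
  have hψ : ∀ s : S k, ψ (q s) = Gs s := fun s => Ideal.Quotient.lift_mk _ _ _
  -- the two compositions
  have hψφ : ψ.comp φ = RingHom.id (L k) := by
    refine IsLocalization.ringHom_ext (Submonoid.powers (X 0 : MvPolynomial (Fin 3) k)) ?_
    refine MvPolynomial.ringHom_ext (fun r => ?_) (fun i => ?_)
    · simp only [RingHom.comp_apply, RingHom.id_apply]
      rw [hφ, hFC r, IsScalarTower.algebraMap_apply k (S k) (S k ⧸ I₀ k m) r,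
        Ideal.Quotient.algebraMap_eq, ← hqdef, hψ,
        IsScalarTower.algebraMap_apply k (MvPolynomial (Fin 5) k) (S k) r, hGs,
        MvPolynomial.algebraMap_eq]
      have hGC : G (C r) = algebraMap k (L k) r := by simp [hGdef]
      rw [hGC, IsScalarTower.algebraMap_apply k (MvPolynomial (Fin 3) k) (L k) r,
        MvPolynomial.algebraMap_eq]
    · simp only [RingHom.comp_apply, RingHom.id_apply]
      rw [hφ]
      fin_cases i
      · show ψ (F (X 0)) = algebraMap (MvPolynomial (Fin 3) k) (L k) (X 0)
        rw [hFX0, hψ, hGx₁, hlx]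
      · show ψ (F (X 1)) = algebraMap (MvPolynomial (Fin 3) k) (L k) (X 1)
        rw [hFX1, hψ, hGy, hly]
      · show ψ (F (X 2)) = algebraMap (MvPolynomial (Fin 3) k) (L k) (X 2)
        rw [hFX2, hψ, hGt₁, hlt]
  have hφψ : φ.comp ψ = RingHom.id (S k ⧸ I₀ k m) := by
    refine Ideal.Quotient.ringHom_ext ?_
    refine IsLocalization.ringHom_ext
      (Submonoid.powers ((X 0 * X 1 : MvPolynomial (Fin 5) k))) ?_
    refine MvPolynomial.ringHom_ext (fun r => ?_) (fun i => ?_)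
    · simp only [RingHom.comp_apply, RingHom.id_apply]
      rw [hψ, hGs]
      have hGC : G (C r) = algebraMap k (L k) r := by simp [hGdef]
      rw [hGC, IsScalarTower.algebraMap_apply k (MvPolynomial (Fin 3) k) (L k) r, hφ,
        MvPolynomial.algebraMap_eq, hFC r,
        IsScalarTower.algebraMap_apply k (S k) (S k ⧸ I₀ k m) r,
        Ideal.Quotient.algebraMap_eq, ← hqdef,
        IsScalarTower.algebraMap_apply k (MvPolynomial (Fin 5) k) (S k) r,
        MvPolynomial.algebraMap_eq]
    · simp only [RingHom.comp_apply, RingHom.id_apply]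
      fin_cases i
      · show φ (ψ (q (x₁ k))) = q (x₁ k)
        rw [hψ, hGx₁, hlx, hφ, hFX0]
      · show φ (ψ (q (x₂ k))) = q (x₂ k)
        rw [hψ, hGx₂, hlx, hφ, hFX0]
        exact π_x_eq k m
      · show φ (ψ (q (y k))) = q (y k)
        rw [hψ, hGy, hly, hφ, hFX1]
      · show φ (ψ (q (t₁ k))) = q (t₁ k)
        rw [hψ, hGt₁, hlt, hφ, hFX2]
      · show φ (ψ (q (t₂ k))) = q (t₂ k)
        rw [hψ, hGt₂, hlt, hφ, hFX2]
        exact π_t_eq k m hm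
  refine ⟨RingEquiv.ofRingHom φ ψ hφψ hψφ, ?_, ?_, ?_, ?_⟩
  · show φ _ = _
    rw [hφ, hFX0]
  · show φ _ = _
    rw [hφ, hFX1]
  · show φ _ = _
    rw [hφ, hFX2]
  · intro c
    show φ _ = _
    rw [IsScalarTower.algebraMap_apply k (MvPolynomial (Fin 3) k) (L k) c, hφ,
      MvPolynomial.algebraMap_eq, hFC c]

end Stmt8
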